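/- For every n × n real matrix A, the minimal radius of a bounding ball of the Birkhoff polytope Ω_n centered at A relative to the Frobenius norm is r_F(A) = max_{D ∈ Ω_n} ‖A − D‖_F = ( ‖A‖_F² + n − 2·tr_min(A) )^{1/2}. -/

import Mathlib

open Matrix BigOperators

/-- The matrix `J_n` with all entries equal to `1/n`. -/
noncomputable def matJ (n : ℕ) : Matrix (Fin n) (Fin n) ℝ :=
  Matrix.of fun _ _ => (n : ℝ)⁻¹

/-- The singular values of a real square matrix: the square roots of the
eigenvalues of `Aᴴ * A` (`Aᴴ = Aᵀ` over `ℝ`). -/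
noncomputable def singularValues {n : ℕ} (A : Matrix (Fin n) (Fin n) ℝ) : Fin n → ℝ :=
  fun i => Real.sqrt ((Matrix.isHermitian_conjTranspose_mul_self A).eigenvalues i)

/-- The Schatten `p`-norm of a real square matrix. -/
noncomputable def schattenNorm {n : ℕ} (p : ℝ) (A : Matrix (Fin n) (Fin n) ℝ) : ℝ :=
  (∑ i, singularValues A i ^ p) ^ (1 / p)

/-- The Frobenius norm of a real square matrix. -/
noncomputable def frobNorm {n : ℕ} (A : Matrix (Fin n) (Fin n) ℝ) : ℝ :=
  Real.sqrt (∑ i, ∑ j, (A i j) ^ 2)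

/-- The minimal trace of a square matrix: the minimum over all permutations `σ`
of `∑ i, A i (σ i)`. -/
noncomputable def trMin {n : ℕ} (A : Matrix (Fin n) (Fin n) ℝ) : ℝ :=
  ⨅ σ : Equiv.Perm (Fin n), ∑ i, A i (σ i)

/-- A matrix is a permutation matrix if it is the matrix of some permutation. -/
def IsPermMatrix {n : ℕ} (P : Matrix (Fin n) (Fin n) ℝ) : Prop :=
  ∃ σ : Equiv.Perm (Fin n), P = σ.permMatrix ℝ

attribute [local instance] Matrix.frobeniusNormedAddCommGroup Matrix.frobeniusNormedSpace

lemma frobNorm_eq_norm {n : ℕ} (A : Matrix (Fin n) (Fin n) ℝ) : frobNorm A = ‖A‖ := by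
  rw [Matrix.frobenius_norm_def, frobNorm, Real.sqrt_eq_rpow]
  congr 1
  refine Finset.sum_congr rfl fun i _ => Finset.sum_congr rfl fun j _ => ?_
  rw [Real.rpow_two, Real.norm_eq_abs, sq_abs]

lemma permMatrix_apply {n : ℕ} (σ : Equiv.Perm (Fin n)) (i j : Fin n) :
    σ.permMatrix ℝ i j = if j = σ i then 1 else 0 := by
  simp [Equiv.Perm.permMatrix, PEquiv.toMatrix_apply, Equiv.toPEquiv_apply, eq_comm]

lemma key {n : ℕ} (A : Matrix (Fin n) (Fin n) ℝ) (σ : Equiv.Perm (Fin n)) :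
    frobNorm (A - σ.permMatrix ℝ)
      = Real.sqrt (frobNorm A ^ 2 + n - 2 * ∑ i, A i (σ i)) := by
  have hA : frobNorm A ^ 2 = ∑ i, ∑ j, (A i j)^2 :=
    Real.sq_sqrt (Finset.sum_nonneg fun i _ =>
      Finset.sum_nonneg fun j _ => sq_nonneg _)
  rw [frobNorm]
  congr 1
  have : ∀ i : Fin n, ∑ j, ((A - σ.permMatrix ℝ) i j)^2
      = (∑ j, (A i j)^2) + 1 - 2 * A i (σ i) := by
    intro i
    have : ∀ j, ((A - σ.permMatrix ℝ) i j)^2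
        = (A i j)^2 + (if j = σ i then (1:ℝ) else 0) - 2 * (if j = σ i then A i j else 0) := by
      intro j
      simp only [Matrix.sub_apply, permMatrix_apply]
      split <;> ring
    simp_rw [this]
    rw [Finset.sum_sub_distrib, Finset.sum_add_distrib]
    simp [Finset.sum_ite_eq', mul_ite, mul_zero]
  simp_rw [this]
  rw [Finset.sum_sub_distrib, Finset.sum_add_distrib, ← Finset.mul_sum, ← hA]
  simp


/-- For every `n × n` real matrix `A`, the minimal radius of a bounding
ball of `Ω_n` centered at `A` relative to the Frobenius norm is attained and equals
`(‖A‖_F² + n − 2 tr_min(A))^{1/2}`. -/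
theorem frob_bounding_radius {n : ℕ} (A : Matrix (Fin n) (Fin n) ℝ) :
    IsGreatest {r : ℝ | ∃ D ∈ doublyStochastic ℝ (Fin n), r = frobNorm (A - D)}
      (Real.sqrt (frobNorm A ^ 2 + n - 2 * trMin A)) := by
  obtain ⟨σ0, hσ0⟩ := Finite.exists_min (fun σ : Equiv.Perm (Fin n) => ∑ i, A i (σ i))
  have htr : trMin A = ∑ i, A i (σ0 i) :=
    le_antisymm (ciInf_le (Finite.bddBelow_range _) σ0) (le_ciInf hσ0)
  constructor
  · exact ⟨σ0.permMatrix ℝ, permMatrix_mem_doublyStochastic, by rw [key, htr]⟩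
  · rintro r ⟨D, hD, rfl⟩
    have hconv : ConvexOn ℝ Set.univ (fun X : Matrix (Fin n) (Fin n) ℝ => frobNorm (A - X)) := by
      have h := convexOn_dist A (convex_univ (𝕜 := ℝ) (E := Matrix (Fin n) (Fin n) ℝ))
      convert h using 2 with X
      · rfl
      · rfl
      rw [dist_eq_norm, frobNorm_eq_norm, norm_sub_rev]
    have hD' : D ∈ convexHull ℝ {P : Matrix (Fin n) (Fin n) ℝ |
        ∃ σ : Equiv.Perm (Fin n), σ.permMatrix ℝ = P} := by
      rw [← doublyStochastic_eq_convexHull_permMatrix]; exact hD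
    obtain ⟨P, ⟨σ, rfl⟩, hle⟩ := hconv.exists_ge_of_mem_convexHull (Set.subset_univ _) hD'
    have h1 : trMin A ≤ ∑ i, A i (σ i) := ciInf_le (Finite.bddBelow_range _) σ
    refine hle.trans ?_
    rw [key]
    exact Real.sqrt_le_sqrt (by linarith)
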